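/- In the finite phase-separated co-design model, fix behavior parameters θ₀ ∈ ℝ^m and φ₀ ∈ ℝ^n, and define the follower-side surrogate L_F(φ) = Σ_τ P(τ;θ₀,φ₀) · γ^T · Σ_{k=0}^{H−1} γ^k (π_F(φ)(b_k|x_k;s_T)/π_F(φ₀)(b_k|x_k;s_T)) · A_F^{φ₀,k}(x_k,b_k;s_T). Then the derivative of the leader objective with respect to the follower parameters equals the surrogate gradient at the behavior parameters: ∇_φ J_L(θ₀,φ)|_{φ=φ₀} = ∇_φ L_F(φ)|_{φ=φ₀}. -/

import Mathlib

open scoped BigOperators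

/-- A trajectory in the finite phase-separated co-design model, with leader horizon
`T + 1` (so `T + 1 ≥ 1`) and follower horizon `H + 1` (so `H + 1 ≥ 1`):
leader states `s 0, …, s (T+1)`, leader actions `a 0, …, a T`,
follower states `x 0, …, x H` and follower actions `b 0, …, b H`. -/
structure Traj (SL AL SF AF : Type) (T H : ℕ) where
  s : Fin (T + 2) → SL
  a : Fin (T + 1) → AL
  x : Fin (H + 1) → SF
  b : Fin (H + 1) → AF

instance instFintypeTraj (SL AL SF AF : Type) (T H : ℕ)
    [Fintype SL] [Fintype AL] [Fintype SF] [Fintype AF] :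
    Fintype (Traj SL AL SF AF T H) :=
  Fintype.ofEquiv
    ((Fin (T + 2) → SL) × (Fin (T + 1) → AL) × (Fin (H + 1) → SF) × (Fin (H + 1) → AF))
    { toFun := fun p => ⟨p.1, p.2.1, p.2.2.1, p.2.2.2⟩
      invFun := fun τ => ⟨τ.s, τ.a, τ.x, τ.b⟩
      left_inv := fun _ => rfl
      right_inv := fun _ => rfl }

variable {SL AL SF AF : Type} [Fintype SL] [Fintype AL] [Fintype SF] [Fintype AF]
variable {m n T H : ℕ}

/-- The terminal morphology `s_T` of a trajectory. -/
def Traj.z (τ : Traj SL AL SF AF T H) : SL := τ.s (Fin.last (T + 1))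

/-- Probability `P(τ; θ, φ)` of a trajectory. -/
def trajProb (μL : SL → ℝ) (PL : SL → AL → SL → ℝ) (μF : SL → SF → ℝ)
    (PF : SL → SF → AF → SF → ℝ) (πL : (Fin m → ℝ) → SL → AL → ℝ)
    (πF : (Fin n → ℝ) → SL → SF → AF → ℝ) (θ : Fin m → ℝ) (φ : Fin n → ℝ)
    (τ : Traj SL AL SF AF T H) : ℝ :=
  μL (τ.s 0) *
    (∏ t : Fin (T + 1),
      πL θ (τ.s t.castSucc) (τ.a t) * PL (τ.s t.castSucc) (τ.a t) (τ.s t.succ)) *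
    μF τ.z (τ.x 0) *
    (∏ k : Fin (H + 1), πF φ τ.z (τ.x k) (τ.b k)) *
    (∏ k : Fin H, PF τ.z (τ.x k.castSucc) (τ.b k.castSucc) (τ.x k.succ))

/-- Follower objective `J_F(θ, φ)`. -/
def JF (γ : ℝ) (μL : SL → ℝ) (PL : SL → AL → SL → ℝ) (μF : SL → SF → ℝ)
    (PF : SL → SF → AF → SF → ℝ) (RF : SL → SF → AF → ℝ)
    (πL : (Fin m → ℝ) → SL → AL → ℝ) (πF : (Fin n → ℝ) → SL → SF → AF → ℝ)
    (T H : ℕ) (θ : Fin m → ℝ) (φ : Fin n → ℝ) : ℝ :=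
  ∑ τ : Traj SL AL SF AF T H, trajProb μL PL μF PF πL πF θ φ τ *
    ∑ k : Fin (H + 1), γ ^ (k : ℕ) * RF τ.z (τ.x k) (τ.b k)

/-- Leader objective `J_L(θ, φ)`. -/
def JL (γ : ℝ) (μL : SL → ℝ) (PL : SL → AL → SL → ℝ) (μF : SL → SF → ℝ)
    (PF : SL → SF → AF → SF → ℝ) (RL : SL → AL → ℝ) (RF : SL → SF → AF → ℝ)
    (πL : (Fin m → ℝ) → SL → AL → ℝ) (πF : (Fin n → ℝ) → SL → SF → AF → ℝ)
    (T H : ℕ) (θ : Fin m → ℝ) (φ : Fin n → ℝ) : ℝ :=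
  ∑ τ : Traj SL AL SF AF T H, trajProb μL PL μF PF πL πF θ φ τ *
    ((∑ t : Fin (T + 1), γ ^ (t : ℕ) * RL (τ.s t.castSucc) (τ.a t)) +
      γ ^ (T + 1) * ∑ k : Fin (H + 1), γ ^ (k : ℕ) * RF τ.z (τ.x k) (τ.b k))

/-- Follower state-action value `Q_F^{φ,k}(x, b; z)`, written in terms of the number
`r` of remaining follower steps after the current one (at stage `k` of a follower
phase with horizon `H + 1`, one has `r = H - k`): the expectation of the discounted
reward-to-go `∑_{j = k}^{H} γ^{j - k} R_F(z, x_j, b_j)` over follower trajectories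
generated from `x, b` by `P_F(·|z,·,·)` and `π_F(φ)(·|·; z)`. -/
def Qrem (γ : ℝ) (PF : SL → SF → AF → SF → ℝ) (RF : SL → SF → AF → ℝ)
    (πF : (Fin n → ℝ) → SL → SF → AF → ℝ) (z : SL) (φ : Fin n → ℝ) :
    ℕ → SF → AF → ℝ
  | 0, x, b => RF z x b
  | r + 1, x, b => RF z x b +
      γ * ∑ x' : SF, PF z x b x' * ∑ b' : AF, πF φ z x' b' * Qrem γ PF RF πF z φ r x' b'

/-- Follower advantage `A_F^{φ,k}(x, b; z) = Q_F^{φ,k}(x, b; z) - V_F^{φ,k}(x; z)`,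
again indexed by the number `r = H - k` of remaining follower steps. -/
def advF (γ : ℝ) (PF : SL → SF → AF → SF → ℝ) (RF : SL → SF → AF → ℝ)
    (πF : (Fin n → ℝ) → SL → SF → AF → ℝ) (z : SL) (φ : Fin n → ℝ)
    (r : ℕ) (x : SF) (b : AF) : ℝ :=
  Qrem γ PF RF πF z φ r x b -
    ∑ b' : AF, πF φ z x b' * Qrem γ PF RF πF z φ r x b'

/-- Leader state-action value `Q_L^{θ,φ,t}(s, a)`, indexed by the number `r` of
remaining leader steps after the current one (at stage `t` of a leader phase with
horizon `T + 1`, one has `r = T - t`); the follower phase has horizon `H + 1`. -/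
def QLrem (γ : ℝ) (PL : SL → AL → SL → ℝ) (μF : SL → SF → ℝ)
    (PF : SL → SF → AF → SF → ℝ) (RL : SL → AL → ℝ) (RF : SL → SF → AF → ℝ)
    (πL : (Fin m → ℝ) → SL → AL → ℝ) (πF : (Fin n → ℝ) → SL → SF → AF → ℝ)
    (H : ℕ) (θ : Fin m → ℝ) (φ : Fin n → ℝ) : ℕ → SL → AL → ℝ
  | 0, s, a => RL s a + γ * ∑ z : SL, PL s a z *
      ∑ x : SF, μF z x * ∑ b : AF, πF φ z x b * Qrem γ PF RF πF z φ H x b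
  | r + 1, s, a => RL s a + γ * ∑ s' : SL, PL s a s' *
      ∑ a' : AL, πL θ s' a' * QLrem γ PL μF PF RL RF πL πF H θ φ r s' a'

/-- Leader advantage `A_L^{θ,φ,t}(s, a) = Q_L^{θ,φ,t}(s, a) - V_L^{θ,φ,t}(s)`,
indexed by the number `r = T - t` of remaining leader steps. -/
def advL (γ : ℝ) (PL : SL → AL → SL → ℝ) (μF : SL → SF → ℝ)
    (PF : SL → SF → AF → SF → ℝ) (RL : SL → AL → ℝ) (RF : SL → SF → AF → ℝ)
    (πL : (Fin m → ℝ) → SL → AL → ℝ) (πF : (Fin n → ℝ) → SL → SF → AF → ℝ)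
    (H : ℕ) (θ : Fin m → ℝ) (φ : Fin n → ℝ) (r : ℕ) (s : SL) (a : AL) : ℝ :=
  QLrem γ PL μF PF RL RF πL πF H θ φ r s a -
    ∑ a' : AL, πL θ s a' * QLrem γ PL μF PF RL RF πL πF H θ φ r s a'

set_option linter.unusedTactic false
set_option linter.unusedSectionVars false
set_option maxHeartbeats 1600000
section Helpers
section Path
variable {SF2 AF2 : Type} [Fintype SF2] [Fintype AF2]
variable (PF : SF2 → AF2 → SF2 → ℝ)

def pathS (r : ℕ) (ν : SF2 → ℝ) (w : Fin (r+1) → SF2 → AF2 → ℝ)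
    (G : (Fin (r+1) → SF2) → (Fin (r+1) → AF2) → ℝ) : ℝ :=
  ∑ x : Fin (r+1) → SF2, ∑ b : Fin (r+1) → AF2,
    ν (x 0) * (∏ j, w j (x j) (b j)) *
      (∏ j : Fin r, PF (x j.castSucc) (b j.castSucc) (x j.succ)) * G x b

lemma pathS_zero (ν : SF2 → ℝ) (w : Fin 1 → SF2 → AF2 → ℝ)
    (G : (Fin 1 → SF2) → (Fin 1 → AF2) → ℝ) :
    pathS PF 0 ν w G
      = ∑ x₀ : SF2, ∑ b₀ : AF2, ν x₀ * w 0 x₀ b₀ * G (fun _ => x₀) (fun _ => b₀) := by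
  unfold pathS
  apply Fintype.sum_equiv (Equiv.funUnique (Fin 1) SF2)
  intro x
  apply Fintype.sum_equiv (Equiv.funUnique (Fin 1) AF2)
  intro b
  have hx : (fun _ : Fin 1 => x 0) = x := funext fun j => by rw [Subsingleton.elim j 0]
  have hb : (fun _ : Fin 1 => b 0) = b := funext fun j => by rw [Subsingleton.elim j 0]
  simp only [Fin.prod_univ_succ, Equiv.funUnique_apply, Fin.prod_univ_zero, mul_one,
    Fin.default_eq_zero]
  rw [hx, hb]

lemma sum_pi_succ {α : Type} [Fintype α] (r : ℕ) (F : (Fin (r+1) → α) → ℝ) :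
    ∑ x : Fin (r+1) → α, F x = ∑ x₀ : α, ∑ x' : Fin r → α, F (Fin.cons x₀ x') := by
  rw [← Equiv.sum_comp (Fin.consEquiv fun _ : Fin (r+1) => α) F, Fintype.sum_prod_type]
  rfl

lemma pathS_succ (r : ℕ) (ν : SF2 → ℝ) (w : Fin (r+2) → SF2 → AF2 → ℝ)
    (G : (Fin (r+2) → SF2) → (Fin (r+2) → AF2) → ℝ) :
    pathS PF (r+1) ν w G
      = ∑ x₀ : SF2, ∑ b₀ : AF2, ν x₀ * w 0 x₀ b₀ *
          pathS PF r (fun x' => PF x₀ b₀ x') (fun j => w j.succ)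
            (fun x b => G (Fin.cons x₀ x) (Fin.cons b₀ b)) := by
  have L : pathS PF (r+1) ν w G
      = ∑ x₀ : SF2, ∑ x' : Fin (r+1) → SF2, ∑ b₀ : AF2, ∑ b' : Fin (r+1) → AF2,
          (fun (X : Fin (r+2) → SF2) (B : Fin (r+2) → AF2) =>
            ν (X 0) * (∏ j, w j (X j) (B j)) *
              (∏ j : Fin (r+1), PF (X j.castSucc) (B j.castSucc) (X j.succ)) * G X B)
            (Fin.cons x₀ x') (Fin.cons b₀ b') := by
    unfold pathS
    rw [sum_pi_succ]
    exact Finset.sum_congr rfl fun x₀ _ => Finset.sum_congr rfl fun x' _ => by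
      rw [sum_pi_succ]
  have R : (∑ x₀ : SF2, ∑ b₀ : AF2, ν x₀ * w 0 x₀ b₀ *
          pathS PF r (fun x' => PF x₀ b₀ x') (fun j => w j.succ)
            (fun x b => G (Fin.cons x₀ x) (Fin.cons b₀ b)))
      = ∑ x₀ : SF2, ∑ b₀ : AF2, ∑ x' : Fin (r+1) → SF2, ∑ b' : Fin (r+1) → AF2,
          ν x₀ * w 0 x₀ b₀ *
            (PF x₀ b₀ (x' 0) * (∏ j, w j.succ (x' j) (b' j)) *
              (∏ j : Fin r, PF (x' j.castSucc) (b' j.castSucc) (x' j.succ)) *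
              G (Fin.cons x₀ x') (Fin.cons b₀ b')) := by
    refine Finset.sum_congr rfl fun x₀ _ => Finset.sum_congr rfl fun b₀ _ => ?_
    unfold pathS
    rw [Finset.mul_sum]
    exact Finset.sum_congr rfl fun x' _ => by rw [Finset.mul_sum]
  rw [L, R]
  refine Finset.sum_congr rfl fun x₀ _ => ?_
  rw [Finset.sum_comm]
  refine Finset.sum_congr rfl fun b₀ _ => Finset.sum_congr rfl fun x' _ =>
    Finset.sum_congr rfl fun b' _ => ?_
  simp only [Fin.prod_univ_succ, Fin.cons_zero, Fin.cons_succ, Fin.castSucc_zero,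
    ← Fin.succ_castSucc]
  ring


lemma pathS_congr (r : ℕ) (ν : SF2 → ℝ) (w w' : Fin (r+1) → SF2 → AF2 → ℝ)
    (G G' : (Fin (r+1) → SF2) → (Fin (r+1) → AF2) → ℝ)
    (hw : ∀ j x b, w j x b = w' j x b) (hG : ∀ x b, G x b = G' x b) :
    pathS PF r ν w G = pathS PF r ν w' G' := by
  unfold pathS
  refine Finset.sum_congr rfl fun x _ => Finset.sum_congr rfl fun b _ => ?_
  rw [hG]
  congr 1
  congr 2
  exact Finset.prod_congr rfl fun j _ => hw j _ _

lemma pathS_add (r : ℕ) (ν : SF2 → ℝ) (w : Fin (r+1) → SF2 → AF2 → ℝ)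
    (G G' : (Fin (r+1) → SF2) → (Fin (r+1) → AF2) → ℝ) :
    pathS PF r ν w (fun x b => G x b + G' x b) = pathS PF r ν w G + pathS PF r ν w G' := by
  unfold pathS
  simp only [mul_add, Finset.sum_add_distrib]

lemma pathS_const_mul (r : ℕ) (ν : SF2 → ℝ) (w : Fin (r+1) → SF2 → AF2 → ℝ) (c : ℝ)
    (G : (Fin (r+1) → SF2) → (Fin (r+1) → AF2) → ℝ) :
    pathS PF r ν w (fun x b => c * G x b) = c * pathS PF r ν w G := by
  unfold pathS
  rw [Finset.mul_sum]
  refine Finset.sum_congr rfl fun x _ => ?_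
  rw [Finset.mul_sum]
  exact Finset.sum_congr rfl fun b _ => by ring

lemma pathS_lin5 (r : ℕ) (ν : SF2 → ℝ) (w : Fin (r+1) → SF2 → AF2 → ℝ)
    (G1 G2 G3 G4 G5 : (Fin (r+1) → SF2) → (Fin (r+1) → AF2) → ℝ) (c2 c3 c4 c5 : ℝ) :
    pathS PF r ν w (fun x b =>
        G1 x b + c2 * G2 x b + c3 * G3 x b + c4 * G4 x b + c5 * G5 x b)
      = pathS PF r ν w G1 + c2 * pathS PF r ν w G2 + c3 * pathS PF r ν w G3
        + c4 * pathS PF r ν w G4 + c5 * pathS PF r ν w G5 := by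
  unfold pathS
  rw [Finset.mul_sum, Finset.mul_sum, Finset.mul_sum, Finset.mul_sum,
    ← Finset.sum_add_distrib, ← Finset.sum_add_distrib, ← Finset.sum_add_distrib,
    ← Finset.sum_add_distrib]
  refine Finset.sum_congr rfl fun x _ => ?_
  rw [Finset.mul_sum, Finset.mul_sum, Finset.mul_sum, Finset.mul_sum,
    ← Finset.sum_add_distrib, ← Finset.sum_add_distrib, ← Finset.sum_add_distrib,
    ← Finset.sum_add_distrib]
  exact Finset.sum_congr rfl fun b _ => by ring

lemma pathS_const (r : ℕ) (ν : SF2 → ℝ) (w : Fin (r+1) → SF2 → AF2 → ℝ) (c : ℝ) :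
    pathS PF r ν w (fun _ _ => c) = c * pathS PF r ν w (fun _ _ => 1) := by
  rw [← pathS_const_mul]
  exact pathS_congr _ _ _ _ _ _ _ (fun _ _ _ => rfl) (fun _ _ => by ring)


end Path

section Follower
variable {SL2 SF2 AF2 : Type} [Fintype SF2] [Fintype AF2]
variable {n : ℕ}

variable {γ : ℝ} {PF : SL2 → SF2 → AF2 → SF2 → ℝ} {RF : SL2 → SF2 → AF2 → ℝ}
  {πF : (Fin n → ℝ) → SL2 → SF2 → AF2 → ℝ} {z : SL2} {φ₀ : Fin n → ℝ}

lemma pathS_mass (hp1 : ∀ x, ∑ b : AF2, πF φ₀ z x b = 1)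
    (hPF1 : ∀ x b, ∑ x' : SF2, PF z x b x' = 1) :
    ∀ (r : ℕ) (ν : SF2 → ℝ),
      pathS (PF z) r ν (fun _ x b => πF φ₀ z x b) (fun _ _ => 1) = ∑ x : SF2, ν x
  | 0, ν => by
    rw [pathS_zero]
    simp only [mul_one]
    refine Finset.sum_congr rfl fun x _ => ?_
    rw [← Finset.mul_sum, hp1, mul_one]
  | r+1, ν => by
    rw [pathS_succ]
    have h1 : ∀ x₀ b₀, pathS (PF z) r (PF z x₀ b₀) (fun _ x b => πF φ₀ z x b)
        (fun _ _ => (1:ℝ)) = ∑ x' : SF2, PF z x₀ b₀ x' :=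
      fun x₀ b₀ => pathS_mass hp1 hPF1 r (PF z x₀ b₀)
    refine Finset.sum_congr rfl fun x₀ _ => ?_
    calc ∑ b₀ : AF2, ν x₀ * πF φ₀ z x₀ b₀ *
          pathS (PF z) r (fun x' => PF z x₀ b₀ x') (fun j x b => πF φ₀ z x b)
            (fun x b => (1:ℝ))
        = ∑ b₀ : AF2, ν x₀ * πF φ₀ z x₀ b₀ := by
          refine Finset.sum_congr rfl fun b₀ _ => ?_
          rw [show pathS (PF z) r (fun x' => PF z x₀ b₀ x') (fun j x b => πF φ₀ z x b)
              (fun x b => (1:ℝ)) = ∑ x' : SF2, PF z x₀ b₀ x' from h1 x₀ b₀,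
            hPF1, mul_one]
      _ = ν x₀ := by rw [← Finset.mul_sum, hp1, mul_one]


lemma pathS_reward (hp1 : ∀ x, ∑ b : AF2, πF φ₀ z x b = 1)
    (hPF1 : ∀ x b, ∑ x' : SF2, PF z x b x' = 1) :
    ∀ (r : ℕ) (ν : SF2 → ℝ),
      pathS (PF z) r ν (fun _ x b => πF φ₀ z x b)
          (fun x b => ∑ i : Fin (r+1), γ ^ (i:ℕ) * RF z (x i) (b i))
        = ∑ x : SF2, ν x * ∑ b : AF2, πF φ₀ z x b * Qrem γ PF RF πF z φ₀ r x b
  | 0, ν => by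
    rw [pathS_zero]
    refine Finset.sum_congr rfl fun x _ => ?_
    rw [Finset.mul_sum]
    refine Finset.sum_congr rfl fun b _ => ?_
    simp only [Fin.sum_univ_succ, Fin.sum_univ_zero, Fin.val_zero, pow_zero, one_mul,
      add_zero, Qrem]
    ring
  | r+1, ν => by
    rw [pathS_succ]
    have hG : ∀ (x₀ : SF2) (b₀ : AF2) (x : Fin (r+1) → SF2) (b : Fin (r+1) → AF2),
        (∑ i : Fin (r+2), γ ^ (i:ℕ) * RF z (Fin.cons (α := fun _ => SF2) x₀ x i) (Fin.cons (α := fun _ => AF2) b₀ b i))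
          = RF z x₀ b₀ + γ * ∑ i : Fin (r+1), γ ^ (i:ℕ) * RF z (x i) (b i) := by
      intro x₀ b₀ x b
      rw [Fin.sum_univ_succ, Finset.mul_sum]
      simp only [Fin.cons_zero, Fin.cons_succ, Fin.val_zero, pow_zero, one_mul, Fin.val_succ]
      exact congrArg _ (Finset.sum_congr rfl fun i _ => by rw [pow_succ']; ring)
    have key : ∀ (x₀ : SF2) (b₀ : AF2),
        pathS (PF z) r (fun x' => PF z x₀ b₀ x') (fun j x b => πF φ₀ z x b)
          (fun x b => ∑ i : Fin (r+2), γ ^ (i:ℕ) * RF z (Fin.cons (α := fun _ => SF2) x₀ x i) (Fin.cons (α := fun _ => AF2) b₀ b i))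
          = Qrem γ PF RF πF z φ₀ (r+1) x₀ b₀ := by
      intro x₀ b₀
      rw [pathS_congr (PF z) r _ _ (fun _ x b => πF φ₀ z x b) _
        (fun x b => RF z x₀ b₀ + γ * ∑ i : Fin (r+1), γ ^ (i:ℕ) * RF z (x i) (b i))
        (fun _ _ _ => rfl) (hG x₀ b₀), pathS_add, pathS_const, pathS_const_mul,
        pathS_mass hp1 hPF1 r, pathS_reward hp1 hPF1 r]
      rw [hPF1, mul_one]
      simp only [Qrem]
    refine Finset.sum_congr rfl fun x₀ _ => ?_
    rw [Finset.mul_sum]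
    refine Finset.sum_congr rfl fun b₀ _ => ?_
    rw [key x₀ b₀]
    ring


lemma pathS_baseline [Nonempty AF2] (hp1 : ∀ x, ∑ b : AF2, πF φ₀ z x b = 1)
    (hPF1 : ∀ x b, ∑ x' : SF2, PF z x b x' = 1)
    (u : SF2 → AF2 → ℝ) (hu : ∀ x, ∑ b : AF2, u x b = 0) :
    ∀ (r : ℕ) (k : Fin (r+1)) (ν : SF2 → ℝ)
      (F : (Fin (r+1) → SF2) → (Fin (r+1) → AF2) → ℝ),
      (∀ x x' b b', (∀ j, j ≤ k → x j = x' j) → (∀ j, j < k → b j = b' j) → F x b = F x' b') →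
      pathS (PF z) r ν (fun j x b => if j = k then u x b else πF φ₀ z x b) F = 0 := by
  intro r
  induction r with
  | zero =>
    intro k ν F hF
    obtain rfl : k = 0 := Fin.le_zero_iff.mp (Fin.le_last k)
    rw [pathS_zero]
    refine Finset.sum_eq_zero fun x₀ _ => ?_
    have hb : ∀ b₀ : AF2, F (fun _ => x₀) (fun _ => b₀)
        = F (fun _ => x₀) (fun _ => Classical.arbitrary AF2) :=
      fun b₀ => hF _ _ _ _ (fun j _ => rfl) (fun j hj => absurd hj (Fin.not_lt_zero j))
    have : (∑ b₀ : AF2, ν x₀ * (if (0 : Fin 1) = 0 then u x₀ b₀ else πF φ₀ z x₀ b₀) *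
          F (fun _ => x₀) (fun _ => b₀))
        = (ν x₀ * F (fun _ => x₀) (fun _ => Classical.arbitrary AF2)) * ∑ b₀ : AF2, u x₀ b₀ := by
      rw [Finset.mul_sum]
      exact Finset.sum_congr rfl fun b₀ _ => by rw [hb b₀, if_pos rfl]; ring
    rw [this, hu, mul_zero]
  | succ r IH =>
    intro k ν F hF
    rcases Fin.eq_zero_or_eq_succ k with rfl | ⟨i, rfl⟩
    · rw [pathS_succ]
      refine Finset.sum_eq_zero fun x₀ _ => ?_
      have hC : ∀ (x : Fin (r+1) → SF2) (b : Fin (r+1) → AF2) (b₀ : AF2),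
          F (Fin.cons x₀ x) (Fin.cons b₀ b)
            = F (fun _ => x₀) (fun _ => Classical.arbitrary AF2) := by
        intro x b b₀
        refine hF _ _ _ _ (fun j hj => ?_) (fun j hj => absurd hj (Fin.not_lt_zero j))
        obtain rfl : j = 0 := Fin.le_zero_iff.mp hj
        rfl
      have key : ∀ b₀ : AF2,
          pathS (PF z) r (fun x' => PF z x₀ b₀ x')
            (fun j x b => if j.succ = 0 then u x b else πF φ₀ z x b)
            (fun x b => F (Fin.cons x₀ x) (Fin.cons b₀ b))
          = F (fun _ => x₀) (fun _ => Classical.arbitrary AF2) := by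
        intro b₀
        rw [pathS_congr (PF z) r _ _ (fun _ x b => πF φ₀ z x b) _
            (fun _ _ => F (fun _ => x₀) (fun _ => Classical.arbitrary AF2))
            (fun j x b => by rw [if_neg (Fin.succ_ne_zero j)])
            (fun x b => hC x b b₀),
          pathS_const, pathS_mass hp1 hPF1 r, hPF1, mul_one]
      have : (∑ b₀ : AF2, ν x₀ * (if (0 : Fin (r+2)) = 0 then u x₀ b₀ else πF φ₀ z x₀ b₀) *
            pathS (PF z) r (fun x' => PF z x₀ b₀ x')
              (fun j x b => if j.succ = 0 then u x b else πF φ₀ z x b)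
              (fun x b => F (Fin.cons x₀ x) (Fin.cons b₀ b)))
          = (ν x₀ * F (fun _ => x₀) (fun _ => Classical.arbitrary AF2)) * ∑ b₀ : AF2, u x₀ b₀ := by
        rw [Finset.mul_sum]
        exact Finset.sum_congr rfl fun b₀ _ => by rw [key b₀, if_pos rfl]; ring
      rw [this, hu, mul_zero]
    · rw [pathS_succ]
      refine Finset.sum_eq_zero fun x₀ _ => Finset.sum_eq_zero fun b₀ _ => ?_
      have hF' : ∀ x x' b b', (∀ j, j ≤ i → x j = x' j) → (∀ j, j < i → b j = b' j) →
          F (Fin.cons x₀ x) (Fin.cons b₀ b) = F (Fin.cons x₀ x') (Fin.cons b₀ b') := by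
        intro x x' b b' hx hb
        refine hF _ _ _ _ (fun j hj => ?_) (fun j hj => ?_)
        · induction j using Fin.cases with
          | zero => rfl
          | succ l => simp only [Fin.cons_succ]; exact hx l (Fin.succ_le_succ_iff.mp hj)
        · induction j using Fin.cases with
          | zero => rfl
          | succ l => simp only [Fin.cons_succ]; exact hb l (Fin.succ_lt_succ_iff.mp hj)
      have key : pathS (PF z) r (fun x' => PF z x₀ b₀ x')
            (fun j x b => if j.succ = i.succ then u x b else πF φ₀ z x b)
            (fun x b => F (Fin.cons x₀ x) (Fin.cons b₀ b)) = 0 := by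
        rw [pathS_congr (PF z) r _ _ (fun j x b => if j = i then u x b else πF φ₀ z x b) _
            (fun x b => F (Fin.cons x₀ x) (Fin.cons b₀ b))
            (fun j x b => by simp only [Fin.succ_inj]) (fun _ _ => rfl)]
        exact IH i _ _ hF'
      rw [key, mul_zero]


lemma cons_reward_split (r : ℕ) (x₀ : SF2) (b₀ : AF2) (x : Fin (r+1) → SF2)
    (b : Fin (r+1) → AF2) :
    (∑ i : Fin (r+2), γ ^ (i:ℕ) * RF z (Fin.cons (α := fun _ => SF2) x₀ x i)
        (Fin.cons (α := fun _ => AF2) b₀ b i))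
      = RF z x₀ b₀ + γ * ∑ i : Fin (r+1), γ ^ (i:ℕ) * RF z (x i) (b i) := by
  rw [Fin.sum_univ_succ, Finset.mul_sum]
  simp only [Fin.cons_zero, Fin.cons_succ, Fin.val_zero, pow_zero, one_mul, Fin.val_succ]
  exact congrArg _ (Finset.sum_congr rfl fun i _ => by rw [pow_succ']; ring)

lemma pathS_tailQ (hp1 : ∀ x, ∑ b : AF2, πF φ₀ z x b = 1)
    (hPF1 : ∀ x b, ∑ x' : SF2, PF z x b x' = 1) (u : SF2 → AF2 → ℝ) :
    ∀ (r : ℕ) (k : Fin (r+1)) (ν : SF2 → ℝ),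
      pathS (PF z) r ν (fun j x b => if j = k then u x b else πF φ₀ z x b)
        (fun x b => ∑ j : Fin (r+1), if k ≤ j then γ ^ ((j:ℕ) - (k:ℕ)) * RF z (x j) (b j) else 0)
      = pathS (PF z) r ν (fun j x b => if j = k then u x b else πF φ₀ z x b)
        (fun x b => Qrem γ PF RF πF z φ₀ (r - (k:ℕ)) (x k) (b k)) := by
  intro r
  induction r with
  | zero =>
    intro k ν
    obtain rfl : k = 0 := Fin.le_zero_iff.mp (Fin.le_last k)
    refine pathS_congr _ _ _ _ _ _ _ (fun _ _ _ => rfl) (fun x b => ?_)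
    simp [Fin.sum_univ_succ, Fin.zero_le, Qrem]
  | succ r IH =>
    intro k ν
    rcases Fin.eq_zero_or_eq_succ k with rfl | ⟨i, rfl⟩
    · rw [pathS_succ, pathS_succ]
      refine Finset.sum_congr rfl fun x₀ _ => Finset.sum_congr rfl fun b₀ _ => ?_
      congr 1
      have hL : pathS (PF z) r (fun x' => PF z x₀ b₀ x')
            (fun j x b => if j.succ = 0 then u x b else πF φ₀ z x b)
            (fun x b => ∑ j : Fin (r+2), if (0 : Fin (r+2)) ≤ j then
              γ ^ ((j:ℕ) - ((0 : Fin (r+2)):ℕ)) *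
                RF z (Fin.cons (α := fun _ => SF2) x₀ x j) (Fin.cons (α := fun _ => AF2) b₀ b j)
              else 0)
          = Qrem γ PF RF πF z φ₀ (r+1) x₀ b₀ := by
        rw [pathS_congr (PF z) r _ _ (fun _ x b => πF φ₀ z x b) _
            (fun x b => RF z x₀ b₀ + γ * ∑ i : Fin (r+1), γ ^ (i:ℕ) * RF z (x i) (b i))
            (fun j x b => by rw [if_neg (Fin.succ_ne_zero j)])
            (fun x b => ?_),
          pathS_add, pathS_const, pathS_const_mul, pathS_mass hp1 hPF1 r,
          pathS_reward hp1 hPF1 r, hPF1, mul_one]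
        · simp only [Qrem]
        · beta_reduce
          rw [← cons_reward_split (γ := γ) (RF := RF) (z := z) r x₀ b₀ x b]
          refine Finset.sum_congr rfl fun j _ => ?_
          rw [if_pos (Fin.zero_le j)]
          norm_num
      have hR : pathS (PF z) r (fun x' => PF z x₀ b₀ x')
            (fun j x b => if j.succ = 0 then u x b else πF φ₀ z x b)
            (fun x b => Qrem γ PF RF πF z φ₀ (r + 1 - ((0 : Fin (r+2)):ℕ))
              (Fin.cons (α := fun _ => SF2) x₀ x 0) (Fin.cons (α := fun _ => AF2) b₀ b 0))
          = Qrem γ PF RF πF z φ₀ (r+1) x₀ b₀ := by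
        rw [pathS_congr (PF z) r _ _ (fun _ x b => πF φ₀ z x b) _
            (fun _ _ => Qrem γ PF RF πF z φ₀ (r+1) x₀ b₀)
            (fun j x b => by rw [if_neg (Fin.succ_ne_zero j)])
            (fun x b => by beta_reduce; rw [Fin.cons_zero, Fin.cons_zero]; norm_num),
          pathS_const, pathS_mass hp1 hPF1 r, hPF1, mul_one]
      rw [hL, hR]
    · rw [pathS_succ, pathS_succ]
      refine Finset.sum_congr rfl fun x₀ _ => Finset.sum_congr rfl fun b₀ _ => ?_
      congr 1
      have step : pathS (PF z) r (fun x' => PF z x₀ b₀ x')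
            (fun j x b => if j = i then u x b else πF φ₀ z x b)
            (fun x b => ∑ j : Fin (r+1), if i ≤ j then
              γ ^ ((j:ℕ) - ((i:ℕ))) * RF z (x j) (b j) else 0)
          = pathS (PF z) r (fun x' => PF z x₀ b₀ x')
            (fun j x b => if j = i then u x b else πF φ₀ z x b)
            (fun x b => Qrem γ PF RF πF z φ₀ (r - (i:ℕ)) (x i) (b i)) := IH i _
      calc pathS (PF z) r (fun x' => PF z x₀ b₀ x')
            (fun j x b => if j.succ = i.succ then u x b else πF φ₀ z x b)
            (fun x b => ∑ j : Fin (r+2), if i.succ ≤ j then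
              γ ^ ((j:ℕ) - ((i.succ : Fin (r+2)):ℕ)) *
                RF z (Fin.cons (α := fun _ => SF2) x₀ x j) (Fin.cons (α := fun _ => AF2) b₀ b j)
              else 0)
          = pathS (PF z) r (fun x' => PF z x₀ b₀ x')
            (fun j x b => if j = i then u x b else πF φ₀ z x b)
            (fun x b => ∑ j : Fin (r+1), if i ≤ j then
              γ ^ ((j:ℕ) - ((i:ℕ))) * RF z (x j) (b j) else 0) := by
            refine pathS_congr _ _ _ _ _ _ _
              (fun j x b => by simp only [Fin.succ_inj]) (fun x b => ?_)
            beta_reduce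
            rw [Fin.sum_univ_succ]
            have h0 : ¬ (i.succ : Fin (r+2)) ≤ 0 := by
              simp [Fin.le_zero_iff, Fin.succ_ne_zero]
            rw [if_neg h0, zero_add]
            refine Finset.sum_congr rfl fun l _ => ?_
            simp only [Fin.succ_le_succ_iff]
            by_cases h : i ≤ l
            · rw [if_pos h, if_pos h, Fin.cons_succ, Fin.cons_succ]
              norm_num [Fin.val_succ, Nat.succ_sub_succ]
            · rw [if_neg h, if_neg h]
        _ = pathS (PF z) r (fun x' => PF z x₀ b₀ x')
            (fun j x b => if j = i then u x b else πF φ₀ z x b)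
            (fun x b => Qrem γ PF RF πF z φ₀ (r - (i:ℕ)) (x i) (b i)) := step
        _ = pathS (PF z) r (fun x' => PF z x₀ b₀ x')
            (fun j x b => if j.succ = i.succ then u x b else πF φ₀ z x b)
            (fun x b => Qrem γ PF RF πF z φ₀ (r + 1 - ((i.succ : Fin (r+2)):ℕ))
              (Fin.cons (α := fun _ => SF2) x₀ x i.succ)
              (Fin.cons (α := fun _ => AF2) b₀ b i.succ)) := by
            refine pathS_congr _ _ _ _ _ _ _
              (fun j x b => by simp only [Fin.succ_inj]) (fun x b => ?_)
            beta_reduce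
            rw [Fin.cons_succ, Fin.cons_succ]
            norm_num [Fin.val_succ, Nat.succ_sub_succ]


lemma pathS_bracket [Nonempty AF2] (hp1 : ∀ x, ∑ b : AF2, πF φ₀ z x b = 1)
    (hPF1 : ∀ x b, ∑ x' : SF2, PF z x b x' = 1)
    (u : SF2 → AF2 → ℝ) (hu : ∀ x, ∑ b : AF2, u x b = 0)
    (r : ℕ) (k : Fin (r+1)) (ν : SF2 → ℝ) (C c : ℝ) :
    pathS (PF z) r ν (fun j x b => if j = k then u x b else πF φ₀ z x b)
      (fun x b => C + c * (∑ j : Fin (r+1), γ ^ (j:ℕ) * RF z (x j) (b j))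
        - c * γ ^ ((k:ℕ)) * advF γ PF RF πF z φ₀ (r - (k:ℕ)) (x k) (b k)) = 0 := by
  have hsplit : ∀ (x : Fin (r+1) → SF2) (b : Fin (r+1) → AF2),
      (∑ j : Fin (r+1), γ ^ (j:ℕ) * RF z (x j) (b j))
        = (∑ j : Fin (r+1), if j < k then γ ^ (j:ℕ) * RF z (x j) (b j) else 0)
          + γ ^ ((k:ℕ)) *
            ∑ j : Fin (r+1), if k ≤ j then γ ^ ((j:ℕ) - (k:ℕ)) * RF z (x j) (b j) else 0 := by
    intro x b
    rw [Finset.mul_sum, ← Finset.sum_add_distrib]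
    refine Finset.sum_congr rfl fun j _ => ?_
    by_cases h : k ≤ j
    · rw [if_neg (not_lt.mpr h), if_pos h, zero_add, ← mul_assoc, ← pow_add,
        Nat.add_sub_cancel' (Fin.le_iff_val_le_val.mp h)]
    · rw [if_pos (not_le.mp h), if_neg h, mul_zero, add_zero]
  have hpt : ∀ (x : Fin (r+1) → SF2) (b : Fin (r+1) → AF2),
      (C + c * (∑ j : Fin (r+1), γ ^ (j:ℕ) * RF z (x j) (b j))
        - c * γ ^ ((k:ℕ)) * advF γ PF RF πF z φ₀ (r - (k:ℕ)) (x k) (b k))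
      = C + c * (∑ j : Fin (r+1), if j < k then γ ^ (j:ℕ) * RF z (x j) (b j) else 0)
          + (c * γ ^ ((k:ℕ))) *
            (∑ b' : AF2, πF φ₀ z (x k) b' * Qrem γ PF RF πF z φ₀ (r - (k:ℕ)) (x k) b')
          + (c * γ ^ ((k:ℕ))) *
            (∑ j : Fin (r+1), if k ≤ j then γ ^ ((j:ℕ) - (k:ℕ)) * RF z (x j) (b j) else 0)
          + (-(c * γ ^ ((k:ℕ)))) * Qrem γ PF RF πF z φ₀ (r - (k:ℕ)) (x k) (b k) := by
    intro x b
    rw [hsplit x b]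
    unfold advF
    ring
  have hC0 : pathS (PF z) r ν (fun j x b => if j = k then u x b else πF φ₀ z x b)
      (fun _ _ => C) = 0 :=
    pathS_baseline hp1 hPF1 u hu r k ν _ (fun _ _ _ _ _ _ => rfl)
  have hA : pathS (PF z) r ν (fun j x b => if j = k then u x b else πF φ₀ z x b)
      (fun x b => ∑ j : Fin (r+1), if j < k then γ ^ (j:ℕ) * RF z (x j) (b j) else 0)
      = 0 := by
    refine pathS_baseline hp1 hPF1 u hu r k ν _ ?_
    intro x x' b b' hx hb
    refine Finset.sum_congr rfl fun j _ => ?_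
    by_cases h : j < k
    · rw [if_pos h, if_pos h, hx j (le_of_lt h), hb j h]
    · rw [if_neg h, if_neg h]
  have hB : pathS (PF z) r ν (fun j x b => if j = k then u x b else πF φ₀ z x b)
      (fun x b => ∑ b' : AF2, πF φ₀ z (x k) b' * Qrem γ PF RF πF z φ₀ (r - (k:ℕ)) (x k) b')
      = 0 := by
    refine pathS_baseline hp1 hPF1 u hu r k ν _ ?_
    intro x x' b b' hx hb
    rw [hx k le_rfl]
  refine Eq.trans (pathS_congr (PF z) r ν
      (fun j x b => if j = k then u x b else πF φ₀ z x b)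
      (fun j x b => if j = k then u x b else πF φ₀ z x b) _
      (fun x b => C + c * (∑ j : Fin (r+1), if j < k then γ ^ (j:ℕ) * RF z (x j) (b j) else 0)
          + (c * γ ^ ((k:ℕ))) *
            (∑ b' : AF2, πF φ₀ z (x k) b' * Qrem γ PF RF πF z φ₀ (r - (k:ℕ)) (x k) b')
          + (c * γ ^ ((k:ℕ))) *
            (∑ j : Fin (r+1), if k ≤ j then γ ^ ((j:ℕ) - (k:ℕ)) * RF z (x j) (b j) else 0)
          + (-(c * γ ^ ((k:ℕ)))) * Qrem γ PF RF πF z φ₀ (r - (k:ℕ)) (x k) (b k))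
      (fun _ _ _ => rfl) hpt) (Eq.trans (pathS_lin5 (PF z) r ν
      (fun j x b => if j = k then u x b else πF φ₀ z x b)
      (fun _ _ => C)
      (fun x b => ∑ j : Fin (r+1), if j < k then γ ^ (j:ℕ) * RF z (x j) (b j) else 0)
      (fun x _ => ∑ b' : AF2, πF φ₀ z (x k) b' * Qrem γ PF RF πF z φ₀ (r - (k:ℕ)) (x k) b')
      (fun x b => ∑ j : Fin (r+1), if k ≤ j then γ ^ ((j:ℕ) - (k:ℕ)) * RF z (x j) (b j) else 0)
      (fun x b => Qrem γ PF RF πF z φ₀ (r - (k:ℕ)) (x k) (b k))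
      c (c * γ ^ ((k:ℕ))) (c * γ ^ ((k:ℕ))) (-(c * γ ^ ((k:ℕ))))) ?_)
  rw [hC0, hA, pathS_tailQ hp1 hPF1 u r k ν]
  have hB' : pathS (PF z) r ν (fun j x b => if j = k then u x b else πF φ₀ z x b)
      (fun x _ => ∑ b' : AF2, πF φ₀ z (x k) b' *
        Qrem γ PF RF πF z φ₀ (r - (k:ℕ)) (x k) b') = 0 := hB
  rw [hB']
  ring

end Follower

section TrajSplit

def trajEquiv (SL AL SF AF : Type) (T H : ℕ) :
    ((Fin (T+2) → SL) × (Fin (T+1) → AL) × (Fin (H+1) → SF) × (Fin (H+1) → AF))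
      ≃ Traj SL AL SF AF T H where
  toFun p := ⟨p.1, p.2.1, p.2.2.1, p.2.2.2⟩
  invFun τ := ⟨τ.s, τ.a, τ.x, τ.b⟩
  left_inv _ := rfl
  right_inv _ := rfl

lemma sum_traj (f : Traj SL AL SF AF T H → ℝ) :
    ∑ τ, f τ = ∑ s : Fin (T+2) → SL, ∑ a : Fin (T+1) → AL, ∑ x : Fin (H+1) → SF,
      ∑ b : Fin (H+1) → AF, f ⟨s, a, x, b⟩ := by
  rw [← Equiv.sum_comp (trajEquiv SL AL SF AF T H) f, Fintype.sum_prod_type]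
  refine Finset.sum_congr rfl fun s _ => ?_
  rw [Fintype.sum_prod_type]
  refine Finset.sum_congr rfl fun a _ => ?_
  rw [Fintype.sum_prod_type]
  rfl

lemma core0 [Nonempty SF] [Nonempty AF] (γ : ℝ) (μL : SL → ℝ) (PL : SL → AL → SL → ℝ)
    (μF : SL → SF → ℝ) (PF : SL → SF → AF → SF → ℝ) (RL : SL → AL → ℝ)
    (RF : SL → SF → AF → ℝ)
    (πL : (Fin m → ℝ) → SL → AL → ℝ) (πF : (Fin n → ℝ) → SL → SF → AF → ℝ)
    (θ₀ : Fin m → ℝ) (φ₀ : Fin n → ℝ)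
    (hπF1 : ∀ z x, ∑ b : AF, πF φ₀ z x b = 1)
    (hPF1 : ∀ z x b, ∑ x' : SF, PF z x b x' = 1)
    (d : SL → SF → AF → ℝ) (hd : ∀ z x, ∑ b : AF, d z x b = 0) :
    ∑ τ : Traj SL AL SF AF T H, ∑ k : Fin (H+1),
      ((((∑ t : Fin (T+1), γ^(t:ℕ) * RL (τ.s t.castSucc) (τ.a t)) +
          γ^(T+1) * ∑ k' : Fin (H+1), γ^((k':ℕ)) * RF τ.z (τ.x k') (τ.b k'))
        - γ^(T+1) * γ^((k:ℕ)) * advF γ PF RF πF τ.z φ₀ (H - (k:ℕ)) (τ.x k) (τ.b k))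
       * (μL (τ.s 0) * (∏ t : Fin (T+1), πL θ₀ (τ.s t.castSucc) (τ.a t) *
            PL (τ.s t.castSucc) (τ.a t) (τ.s t.succ)) * μF τ.z (τ.x 0))
       * (∏ j : Fin H, PF τ.z (τ.x j.castSucc) (τ.b j.castSucc) (τ.x j.succ))
       * ((∏ j ∈ Finset.univ.erase k, πF φ₀ τ.z (τ.x j) (τ.b j)) * d τ.z (τ.x k) (τ.b k)))
    = 0 := by
  rw [Finset.sum_comm]
  refine Finset.sum_eq_zero fun k _ => ?_
  rw [sum_traj]
  refine Finset.sum_eq_zero fun s _ => Finset.sum_eq_zero fun a _ => ?_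
  have hb := pathS_bracket (γ := γ) (PF := PF) (RF := RF) (πF := πF)
    (z := s (Fin.last (T+1))) (φ₀ := φ₀) (hπF1 _) (hPF1 _) (d (s (Fin.last (T+1))))
    (hd _) H k (μF (s (Fin.last (T+1))))
    (∑ t : Fin (T+1), γ^(t:ℕ) * RL (s t.castSucc) (a t)) (γ^(T+1))
  refine Eq.trans (b := (μL (s 0) * (∏ t : Fin (T+1), πL θ₀ (s t.castSucc) (a t) *
      PL (s t.castSucc) (a t) (s t.succ))) *
      pathS (PF (s (Fin.last (T+1)))) H (μF (s (Fin.last (T+1))))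
        (fun j x b => if j = k then d (s (Fin.last (T+1))) x b
          else πF φ₀ (s (Fin.last (T+1))) x b)
        (fun x b => (∑ t : Fin (T+1), γ^(t:ℕ) * RL (s t.castSucc) (a t)) +
          γ^(T+1) * (∑ j : Fin (H+1), γ ^ ((j:ℕ)) * RF (s (Fin.last (T+1))) (x j) (b j))
          - γ^(T+1) * γ ^ ((k:ℕ)) *
            advF γ PF RF πF (s (Fin.last (T+1))) φ₀ (H - (k:ℕ)) (x k) (b k))) ?_
    (by rw [hb, mul_zero])
  unfold pathS
  rw [Finset.mul_sum]
  refine Finset.sum_congr rfl fun x _ => ?_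
  rw [Finset.mul_sum]
  refine Finset.sum_congr rfl fun b _ => ?_
  dsimp only [Traj.z]
  have hw : (∏ j : Fin (H+1), (if j = k then d (s (Fin.last (T+1))) (x j) (b j)
        else πF φ₀ (s (Fin.last (T+1))) (x j) (b j)))
      = d (s (Fin.last (T+1))) (x k) (b k) *
        ∏ j ∈ Finset.univ.erase k, πF φ₀ (s (Fin.last (T+1))) (x j) (b j) := by
    rw [← Finset.mul_prod_erase Finset.univ _ (Finset.mem_univ k), if_pos rfl]
    exact congrArg _ (Finset.prod_congr rfl fun j hj =>
      if_neg (Finset.ne_of_mem_erase hj))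
  rw [hw]
  ring

lemma core [Nonempty SF] [Nonempty AF] (γ : ℝ) (μL : SL → ℝ) (PL : SL → AL → SL → ℝ)
    (μF : SL → SF → ℝ) (PF : SL → SF → AF → SF → ℝ) (RL : SL → AL → ℝ)
    (RF : SL → SF → AF → ℝ)
    (πL : (Fin m → ℝ) → SL → AL → ℝ) (πF : (Fin n → ℝ) → SL → SF → AF → ℝ)
    (θ₀ : Fin m → ℝ) (φ₀ : Fin n → ℝ)
    (hπF0 : ∀ z x b, 0 < πF φ₀ z x b)
    (hπF1 : ∀ z x, ∑ b : AF, πF φ₀ z x b = 1)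
    (hPF1 : ∀ z x b, ∑ x' : SF, PF z x b x' = 1)
    (d : SL → SF → AF → ℝ) (hd : ∀ z x, ∑ b : AF, d z x b = 0) :
    ∑ τ : Traj SL AL SF AF T H, ∑ k : Fin (H+1),
      ((μL (τ.s 0) * (∏ t : Fin (T+1), πL θ₀ (τ.s t.castSucc) (τ.a t) *
            PL (τ.s t.castSucc) (τ.a t) (τ.s t.succ)) * μF τ.z (τ.x 0)) *
        (∏ j : Fin H, PF τ.z (τ.x j.castSucc) (τ.b j.castSucc) (τ.x j.succ)) *
        ((∑ t : Fin (T+1), γ^(t:ℕ) * RL (τ.s t.castSucc) (τ.a t)) +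
          γ^(T+1) * ∑ k' : Fin (H+1), γ^((k':ℕ)) * RF τ.z (τ.x k') (τ.b k'))) *
        ((∏ j ∈ Finset.univ.erase k, πF φ₀ τ.z (τ.x j) (τ.b j)) * d τ.z (τ.x k) (τ.b k))
    = ∑ τ : Traj SL AL SF AF T H, ∑ k : Fin (H+1),
      (trajProb μL PL μF PF πL πF θ₀ φ₀ τ * γ^(T+1) * γ^((k:ℕ)) *
        advF γ PF RF πF τ.z φ₀ (H - (k:ℕ)) (τ.x k) (τ.b k) / πF φ₀ τ.z (τ.x k) (τ.b k)) *
        d τ.z (τ.x k) (τ.b k) := by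
  have h0 := core0 (T := T) (H := H) γ μL PL μF PF RL RF πL πF θ₀ φ₀ hπF1 hPF1 d hd
  have step : ∀ (τ : Traj SL AL SF AF T H) (k : Fin (H+1)),
      ((μL (τ.s 0) * (∏ t : Fin (T+1), πL θ₀ (τ.s t.castSucc) (τ.a t) *
            PL (τ.s t.castSucc) (τ.a t) (τ.s t.succ)) * μF τ.z (τ.x 0)) *
        (∏ j : Fin H, PF τ.z (τ.x j.castSucc) (τ.b j.castSucc) (τ.x j.succ)) *
        ((∑ t : Fin (T+1), γ^(t:ℕ) * RL (τ.s t.castSucc) (τ.a t)) +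
          γ^(T+1) * ∑ k' : Fin (H+1), γ^((k':ℕ)) * RF τ.z (τ.x k') (τ.b k'))) *
        ((∏ j ∈ Finset.univ.erase k, πF φ₀ τ.z (τ.x j) (τ.b j)) * d τ.z (τ.x k) (τ.b k))
      = (trajProb μL PL μF PF πL πF θ₀ φ₀ τ * γ^(T+1) * γ^((k:ℕ)) *
          advF γ PF RF πF τ.z φ₀ (H - (k:ℕ)) (τ.x k) (τ.b k) / πF φ₀ τ.z (τ.x k) (τ.b k)) *
          d τ.z (τ.x k) (τ.b k)
        + ((((∑ t : Fin (T+1), γ^(t:ℕ) * RL (τ.s t.castSucc) (τ.a t)) +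
          γ^(T+1) * ∑ k' : Fin (H+1), γ^((k':ℕ)) * RF τ.z (τ.x k') (τ.b k'))
        - γ^(T+1) * γ^((k:ℕ)) * advF γ PF RF πF τ.z φ₀ (H - (k:ℕ)) (τ.x k) (τ.b k))
       * (μL (τ.s 0) * (∏ t : Fin (T+1), πL θ₀ (τ.s t.castSucc) (τ.a t) *
            PL (τ.s t.castSucc) (τ.a t) (τ.s t.succ)) * μF τ.z (τ.x 0))
       * (∏ j : Fin H, PF τ.z (τ.x j.castSucc) (τ.b j.castSucc) (τ.x j.succ))
       * ((∏ j ∈ Finset.univ.erase k, πF φ₀ τ.z (τ.x j) (τ.b j)) *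
          d τ.z (τ.x k) (τ.b k))) := by
    intro τ k
    have hp : πF φ₀ τ.z (τ.x k) (τ.b k) ≠ 0 := (hπF0 _ _ _).ne'
    simp only [trajProb]
    rw [← Finset.mul_prod_erase Finset.univ
      (fun j => πF φ₀ τ.z (τ.x j) (τ.b j)) (Finset.mem_univ k)]
    field_simp
    ring
  calc ∑ τ : Traj SL AL SF AF T H, ∑ k : Fin (H+1),
      ((μL (τ.s 0) * (∏ t : Fin (T+1), πL θ₀ (τ.s t.castSucc) (τ.a t) *
            PL (τ.s t.castSucc) (τ.a t) (τ.s t.succ)) * μF τ.z (τ.x 0)) *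
        (∏ j : Fin H, PF τ.z (τ.x j.castSucc) (τ.b j.castSucc) (τ.x j.succ)) *
        ((∑ t : Fin (T+1), γ^(t:ℕ) * RL (τ.s t.castSucc) (τ.a t)) +
          γ^(T+1) * ∑ k' : Fin (H+1), γ^((k':ℕ)) * RF τ.z (τ.x k') (τ.b k'))) *
        ((∏ j ∈ Finset.univ.erase k, πF φ₀ τ.z (τ.x j) (τ.b j)) * d τ.z (τ.x k) (τ.b k))
      = ∑ τ : Traj SL AL SF AF T H, ∑ k : Fin (H+1),
        ((trajProb μL PL μF PF πL πF θ₀ φ₀ τ * γ^(T+1) * γ^((k:ℕ)) *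
          advF γ PF RF πF τ.z φ₀ (H - (k:ℕ)) (τ.x k) (τ.b k) / πF φ₀ τ.z (τ.x k) (τ.b k)) *
          d τ.z (τ.x k) (τ.b k)
        + ((((∑ t : Fin (T+1), γ^(t:ℕ) * RL (τ.s t.castSucc) (τ.a t)) +
          γ^(T+1) * ∑ k' : Fin (H+1), γ^((k':ℕ)) * RF τ.z (τ.x k') (τ.b k'))
        - γ^(T+1) * γ^((k:ℕ)) * advF γ PF RF πF τ.z φ₀ (H - (k:ℕ)) (τ.x k) (τ.b k))
       * (μL (τ.s 0) * (∏ t : Fin (T+1), πL θ₀ (τ.s t.castSucc) (τ.a t) *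
            PL (τ.s t.castSucc) (τ.a t) (τ.s t.succ)) * μF τ.z (τ.x 0))
       * (∏ j : Fin H, PF τ.z (τ.x j.castSucc) (τ.b j.castSucc) (τ.x j.succ))
       * ((∏ j ∈ Finset.univ.erase k, πF φ₀ τ.z (τ.x j) (τ.b j)) *
          d τ.z (τ.x k) (τ.b k)))) :=
      Finset.sum_congr rfl fun τ _ => Finset.sum_congr rfl fun k _ => step τ k
    _ = _ := by
      simp only [Finset.sum_add_distrib]
      rw [h0, add_zero]

end TrajSplit

end Helpers

/-- The derivative of the leader objective with respect to the
follower parameters, `∇_φ J_L(θ₀, φ)|_{φ = φ₀}`, equals the gradient of the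
follower-side surrogate `L_F` at the behavior parameters. -/
theorem follower_side_gradient_surrogate
    {SL AL SF AF : Type} [Fintype SL] [Fintype AL] [Fintype SF] [Fintype AF]
    [Nonempty SL] [Nonempty AL] [Nonempty SF] [Nonempty AF]
    {m n T H : ℕ} (γ : ℝ) (hγ0 : 0 < γ) (hγ1 : γ ≤ 1)
    (μL : SL → ℝ) (hμL0 : ∀ s, 0 ≤ μL s) (hμL1 : ∑ s : SL, μL s = 1)
    (PL : SL → AL → SL → ℝ) (hPL0 : ∀ s a s', 0 ≤ PL s a s')
    (hPL1 : ∀ s a, ∑ s' : SL, PL s a s' = 1)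
    (μF : SL → SF → ℝ) (hμF0 : ∀ z x, 0 ≤ μF z x) (hμF1 : ∀ z, ∑ x : SF, μF z x = 1)
    (PF : SL → SF → AF → SF → ℝ) (hPF0 : ∀ z x b x', 0 ≤ PF z x b x')
    (hPF1 : ∀ z x b, ∑ x' : SF, PF z x b x' = 1)
    (RL : SL → AL → ℝ) (RF : SL → SF → AF → ℝ)
    (πL : (Fin m → ℝ) → SL → AL → ℝ) (hπL0 : ∀ θ s a, 0 < πL θ s a)
    (hπL1 : ∀ θ s, ∑ a : AL, πL θ s a = 1)
    (hπLC : ∀ s a, ContDiff ℝ 2 fun θ : Fin m → ℝ => πL θ s a)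
    (πF : (Fin n → ℝ) → SL → SF → AF → ℝ) (hπF0 : ∀ φ z x b, 0 < πF φ z x b)
    (hπF1 : ∀ φ z x, ∑ b : AF, πF φ z x b = 1)
    (hπFC : ∀ z x b, ContDiff ℝ 2 fun φ : Fin n → ℝ => πF φ z x b)
    (θ₀ : Fin m → ℝ) (φ₀ : Fin n → ℝ) :
    fderiv ℝ (fun φ : Fin n → ℝ => JL γ μL PL μF PF RL RF πL πF T H θ₀ φ) φ₀
      =
    fderiv ℝ (fun φ : Fin n → ℝ =>
        ∑ τ : Traj SL AL SF AF T H,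
          trajProb μL PL μF PF πL πF θ₀ φ₀ τ *
            (γ ^ (T + 1) *
              ∑ k : Fin (H + 1), γ ^ (k : ℕ) *
                (πF φ τ.z (τ.x k) (τ.b k) / πF φ₀ τ.z (τ.x k) (τ.b k)) *
                advF γ PF RF πF τ.z φ₀ (H - (k : ℕ)) (τ.x k) (τ.b k))) φ₀ := by
  classical
  have hdiff : ∀ z x b, DifferentiableAt ℝ (fun φ => πF φ z x b) φ₀ :=
    fun z x b => ((hπFC z x b).differentiable (by norm_num)).differentiableAt
  set Dπ : SL → SF → AF → ((Fin n → ℝ) →L[ℝ] ℝ) :=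
    fun z x b => fderiv ℝ (fun φ => πF φ z x b) φ₀ with hDπ
  have hπd : ∀ z x b, HasFDerivAt (fun φ => πF φ z x b) (Dπ z x b) φ₀ :=
    fun z x b => (hdiff z x b).hasFDerivAt
  have hJL : HasFDerivAt (fun φ => JL γ μL PL μF PF RL RF πL πF T H θ₀ φ)
      (∑ τ : Traj SL AL SF AF T H,
        ((∑ t : Fin (T+1), γ^(t:ℕ) * RL (τ.s t.castSucc) (τ.a t)) +
          γ^(T+1) * ∑ k : Fin (H+1), γ^((k:ℕ)) * RF τ.z (τ.x k) (τ.b k)) •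
        ((∏ j : Fin H, PF τ.z (τ.x j.castSucc) (τ.b j.castSucc) (τ.x j.succ)) •
          ((μL (τ.s 0) * (∏ t : Fin (T+1), πL θ₀ (τ.s t.castSucc) (τ.a t) *
              PL (τ.s t.castSucc) (τ.a t) (τ.s t.succ)) * μF τ.z (τ.x 0)) •
            (∑ k : Fin (H+1),
              (∏ j ∈ Finset.univ.erase k, πF φ₀ τ.z (τ.x j) (τ.b j)) •
                Dπ τ.z (τ.x k) (τ.b k))))) φ₀ := by
    refine HasFDerivAt.fun_sum fun τ _ => ?_
    exact (((HasFDerivAt.finset_prod fun k _ => hπd τ.z (τ.x k) (τ.b k)).const_mul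
        (μL (τ.s 0) * (∏ t : Fin (T+1), πL θ₀ (τ.s t.castSucc) (τ.a t) *
          PL (τ.s t.castSucc) (τ.a t) (τ.s t.succ)) * μF τ.z (τ.x 0))).mul_const
        (∏ j : Fin H, PF τ.z (τ.x j.castSucc) (τ.b j.castSucc) (τ.x j.succ))).mul_const
        ((∑ t : Fin (T+1), γ^(t:ℕ) * RL (τ.s t.castSucc) (τ.a t)) +
          γ^(T+1) * ∑ k : Fin (H+1), γ^((k:ℕ)) * RF τ.z (τ.x k) (τ.b k))
  have hsurr : HasFDerivAt (fun φ : Fin n → ℝ => ∑ τ : Traj SL AL SF AF T H,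
        ∑ k : Fin (H+1),
        (trajProb μL PL μF PF πL πF θ₀ φ₀ τ * γ^(T+1) * γ^((k:ℕ)) *
          advF γ PF RF πF τ.z φ₀ (H - (k:ℕ)) (τ.x k) (τ.b k) /
            πF φ₀ τ.z (τ.x k) (τ.b k)) * πF φ τ.z (τ.x k) (τ.b k))
      (∑ τ : Traj SL AL SF AF T H, ∑ k : Fin (H+1),
        (trajProb μL PL μF PF πL πF θ₀ φ₀ τ * γ^(T+1) * γ^((k:ℕ)) *
          advF γ PF RF πF τ.z φ₀ (H - (k:ℕ)) (τ.x k) (τ.b k) /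
            πF φ₀ τ.z (τ.x k) (τ.b k)) • Dπ τ.z (τ.x k) (τ.b k)) φ₀ :=
    HasFDerivAt.fun_sum fun τ _ => HasFDerivAt.fun_sum fun k _ =>
      (hπd τ.z (τ.x k) (τ.b k)).const_mul _
  have hfun : (fun φ : Fin n → ℝ =>
        ∑ τ : Traj SL AL SF AF T H,
          trajProb μL PL μF PF πL πF θ₀ φ₀ τ *
            (γ ^ (T + 1) *
              ∑ k : Fin (H + 1), γ ^ (k : ℕ) *
                (πF φ τ.z (τ.x k) (τ.b k) / πF φ₀ τ.z (τ.x k) (τ.b k)) *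
                advF γ PF RF πF τ.z φ₀ (H - (k : ℕ)) (τ.x k) (τ.b k)))
      = (fun φ : Fin n → ℝ => ∑ τ : Traj SL AL SF AF T H, ∑ k : Fin (H+1),
        (trajProb μL PL μF PF πL πF θ₀ φ₀ τ * γ^(T+1) * γ^((k:ℕ)) *
          advF γ PF RF πF τ.z φ₀ (H - (k:ℕ)) (τ.x k) (τ.b k) /
            πF φ₀ τ.z (τ.x k) (τ.b k)) * πF φ τ.z (τ.x k) (τ.b k)) := by
    funext φ
    refine Finset.sum_congr rfl fun τ _ => ?_
    rw [Finset.mul_sum, Finset.mul_sum]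
    exact Finset.sum_congr rfl fun k _ => by ring
  rw [hJL.fderiv, hfun, hsurr.fderiv]
  refine ContinuousLinearMap.ext fun v => ?_
  have hd : ∀ z x, ∑ b : AF, (Dπ z x b) v = 0 := by
    intro z x
    have h1 : (fun φ : Fin n → ℝ => ∑ b : AF, πF φ z x b) = fun _ => (1:ℝ) :=
      funext fun φ => hπF1 φ z x
    have h2 : HasFDerivAt (fun φ : Fin n → ℝ => ∑ b : AF, πF φ z x b)
        (∑ b : AF, Dπ z x b) φ₀ := HasFDerivAt.fun_sum fun b _ => hπd z x b
    rw [h1] at h2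
    have h3 : (∑ b : AF, Dπ z x b) = 0 := h2.unique (hasFDerivAt_const 1 φ₀)
    rw [← ContinuousLinearMap.sum_apply, h3]
    rfl
  have hcore := core (T := T) (H := H) γ μL PL μF PF RL RF πL πF θ₀ φ₀
    (hπF0 φ₀) (hπF1 φ₀) hPF1 (fun z x b => (Dπ z x b) v) hd
  simp only [ContinuousLinearMap.sum_apply, ContinuousLinearMap.smul_apply, smul_eq_mul]
  have key : ∀ (A B C : ℝ) (f : Fin (H+1) → ℝ),
      A * (B * (C * ∑ k : Fin (H+1), f k)) = ∑ k : Fin (H+1), C * B * A * f k := by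
    intro A B C f
    rw [Finset.mul_sum, Finset.mul_sum, Finset.mul_sum]
    exact Finset.sum_congr rfl fun k _ => by ring
  refine Eq.trans ?_ hcore
  refine Finset.sum_congr rfl fun τ _ => ?_
  exact key _ _ _ _
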